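/- Consider the quarter-plane kernel $K(\alpha,\beta) = \tfrac{1}{3}\alpha^2\beta^2 + \tfrac13 \beta^2 + \tfrac13\alpha^2 - \alpha\beta$ associated with the singular walk with steps $(1,1), (-1,1), (1,-1)$ each of probability $1/3$. Define $\rho = \tfrac{1+\sqrt5}{2}$ and, for $m \in \mathbb{Z}$, $\alpha_m = \frac{\sqrt5}{\rho^{4m-1} + \rho^{-4m+1}}$ and $\beta_m = \frac{\sqrt5}{\rho^{4m+1} + \rho^{-4m-1}}$. Then $K(\alpha_m, \beta_m) = 0$ and $K(\alpha_{m+1}, \beta_m) = 0$ for every $m \in \mathbb{Z}$. -/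

import Mathlib

/-- Key identity: for golden-ratio `ρ`, the pair `(√5/c(x), √5/c(x+2))` with
`c(k) = ρ^k + ρ^(-k)` lies on the zero set of the kernel. -/
lemma key (ρ : ℝ) (hρ : ρ = (1 + Real.sqrt 5) / 2) (x : ℤ) :
    (1 / 3) * (Real.sqrt 5 / (ρ ^ x + ρ ^ (-x))) ^ 2 * (Real.sqrt 5 / (ρ ^ (x+2) + ρ ^ (-(x+2)))) ^ 2
    + (1 / 3) * (Real.sqrt 5 / (ρ ^ (x+2) + ρ ^ (-(x+2)))) ^ 2
    + (1 / 3) * (Real.sqrt 5 / (ρ ^ x + ρ ^ (-x))) ^ 2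
    - (Real.sqrt 5 / (ρ ^ x + ρ ^ (-x))) * (Real.sqrt 5 / (ρ ^ (x+2) + ρ ^ (-(x+2)))) = 0 := by
  have hs : Real.sqrt 5 ^ 2 = 5 := Real.sq_sqrt (by norm_num)
  have hs5 : (1:ℝ) < Real.sqrt 5 := by nlinarith [Real.sqrt_nonneg 5, hs]
  have hρpos : 0 < ρ := by rw [hρ]; linarith
  have hρ2 : ρ ^ 2 = ρ + 1 := by rw [hρ]; field_simp; nlinarith [hs]
  have hρne : ρ ≠ 0 := ne_of_gt hρpos
  set u : ℝ := ρ ^ x with hu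
  have hupos : 0 < u := zpow_pos hρpos x
  have hune : u ≠ 0 := ne_of_gt hupos
  have h1 : ρ ^ (-x) = u⁻¹ := by rw [zpow_neg]
  have h2 : ρ ^ (x + 2) = u * ρ ^ 2 := by
    rw [zpow_add₀ hρne, hu]; norm_num [zpow_two, sq]
  have h3 : ρ ^ (-(x + 2)) = (u * ρ ^ 2)⁻¹ := by rw [zpow_neg, h2]
  rw [h1, h2, h3]
  set cx : ℝ := u + u⁻¹ with hcx
  set cy : ℝ := u * ρ ^ 2 + (u * ρ ^ 2)⁻¹ with hcy
  have hcxpos : 0 < cx := by positivity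
  have hcypos : 0 < cy := by positivity
  have hid : 5 + cx ^ 2 + cy ^ 2 = 3 * (cx * cy) := by
    rw [hcx, hcy]
    field_simp
    linear_combination (ρ^2 + ρ - 1 - 3*u^2*ρ^4 - 3*u^2*ρ^3 + 3*u^2*ρ^2 + u^4*ρ^6 + u^4*ρ^5
      - 2*u^4*ρ^4 - u^4*ρ^3 + u^4*ρ^2 + 3*u^6*ρ^6 + 3*u^6*ρ^5 - 3*u^6*ρ^4
      - u^8*ρ^8 - u^8*ρ^7 + u^8*ρ^6
      + (ρ^2 + ρ - 1) * (u^4*ρ^2 - 3*u^6*ρ^4 + u^8*ρ^6)) * hρ2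
  clear_value cx cy
  field_simp
  linear_combination (Real.sqrt 5 ^ 2) * hid + (Real.sqrt 5 ^ 2) * hs

/-- For the singular walk with steps `(1,1), (-1,1), (1,-1)` each of probability `1/3`,
the Fibonacci-type points `(αₘ, βₘ)` built from the golden ratio `ρ = (1+√5)/2` lie on
the zero set of the kernel `K(α,β) = (1/3)(α²β² + α² + β²) - αβ`, and so do the shifted
pairs `(α_{m+1}, βₘ)`. -/
theorem stmt_15 (ρ : ℝ) (hρ : ρ = (1 + Real.sqrt 5) / 2)
    (α β : ℤ → ℝ)
    (hα : ∀ m : ℤ, α m = Real.sqrt 5 / (ρ ^ (4 * m - 1) + ρ ^ (-(4 * m - 1))))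
    (hβ : ∀ m : ℤ, β m = Real.sqrt 5 / (ρ ^ (4 * m + 1) + ρ ^ (-(4 * m + 1))))
    (K : ℝ → ℝ → ℝ)
    (hK : ∀ a b : ℝ, K a b = (1 / 3) * a ^ 2 * b ^ 2 + (1 / 3) * b ^ 2 + (1 / 3) * a ^ 2 - a * b) :
    ∀ m : ℤ, K (α m) (β m) = 0 ∧ K (α (m + 1)) (β m) = 0 := by
  intro m
  constructor
  · have h := key ρ hρ (4 * m - 1)
    rw [show (4 * m - 1 + 2 : ℤ) = 4 * m + 1 by ring] at h
    rw [hK, hα, hβ]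
    exact h
  · have h := key ρ hρ (4 * m + 1)
    rw [show (4 * m + 1 + 2 : ℤ) = 4 * (m + 1) - 1 by ring] at h
    rw [hK, hα, hβ]
    linear_combination h
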